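/- Consider a finite probability space of group data: let (X_{1:m}, Y_{1:m}) be distributed so that Y_1,...,Y_m are conditionally independent given X_{1:m} with P(Y_i | X_{1:m}) = P(Y_i | X_i), let g : {1,...,k}^m → 𝒵 be an aggregate function on a finite set 𝒵, and set Z = g(Y_{1:m}). Assume each X_i is marginally distributed as X and (X_i, Y_i) is distributed as (X, Y). Then for any loss L, E[L(X,Y)] = E_{(X_{1:m}, Z)}[ (1/m) · (1/P(Z | X_{1:m})) · ∑_{i=1}^m ∑_{j=1}^k P(Z, Y_i = j | X_{1:m}) · L(X_i, j) ], on the event P(Z | X_{1:m}) > 0. -/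

import Mathlib

open scoped Classical

theorem stmt_12 {𝒳 Z : Type*} [Fintype 𝒳] [Fintype Z] {k m : ℕ} (hm : 0 < m)
    -- distribution of the group of instances X_{1:m}
    (px : (Fin m → 𝒳) → ℝ) (hpx0 : ∀ x, 0 ≤ px x) (hpx1 : ∑ x, px x = 1)
    -- conditional label distribution P(Y_i = j | X_i = a) = η a j
    -- (labels are conditionally independent given the instances: Assumption 2)
    (η : 𝒳 → Fin k → ℝ) (hη0 : ∀ a j, 0 ≤ η a j) (hη1 : ∀ a, ∑ j, η a j = 1)
    -- the aggregate function: Z = g(Y_{1:m})  (Assumption 1)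
    (g : (Fin m → Fin k) → Z)
    -- each (X_i, Y_i) is marginally distributed as (X, Y) with joint pmf μ
    (μ : 𝒳 → Fin k → ℝ)
    (hμ : ∀ (i : Fin m) (a : 𝒳) (j : Fin k),
      μ a j = ∑ x ∈ Finset.univ.filter (fun x : Fin m → 𝒳 => x i = a), px x * η a j)
    -- group-level probability P(Z = z | X_{1:m} = x)
    (pZ : (Fin m → 𝒳) → Z → ℝ)
    (hpZ : ∀ x z, pZ x z =
      ∑ y ∈ Finset.univ.filter (fun y : Fin m → Fin k => g y = z), ∏ i, η (x i) (y i))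
    -- instance-level probability P(Z = z, Y_i = j | X_{1:m} = x)
    (pZY : (Fin m → 𝒳) → Z → Fin m → Fin k → ℝ)
    (hpZY : ∀ x z i j, pZY x z i j =
      ∑ y ∈ Finset.univ.filter (fun y : Fin m → Fin k => g y = z ∧ y i = j),
        ∏ v, η (x v) (y v))
    -- an arbitrary loss
    (L : 𝒳 → Fin k → ℝ) :
    -- E[L(X,Y)] equals the expectation over (X_{1:m}, Z) of the aggregate loss,
    -- on the event P(Z | X_{1:m}) > 0
    ∑ a, ∑ j, μ a j * L a j =
      ∑ x, ∑ z,
        if 0 < pZ x z then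
          px x * pZ x z *
            ((1 / (m : ℝ)) * (1 / pZ x z) * ∑ i, ∑ j, pZY x z i j * L (x i) j)
        else 0 := by
  classical
  have hm' : (m : ℝ) ≠ 0 := Nat.cast_ne_zero.mpr hm.ne'
  have hPnn : ∀ (x : Fin m → 𝒳) (y : Fin m → Fin k), 0 ≤ ∏ v, η (x v) (y v) :=
    fun x y => Finset.prod_nonneg fun v _ => hη0 _ _
  have hpZnn : ∀ x z, 0 ≤ pZ x z := by
    intro x z; rw [hpZ]; exact Finset.sum_nonneg fun y _ => hPnn x y
  have hpZY0 : ∀ x z i j, pZ x z = 0 → pZY x z i j = 0 := by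
    intro x z i j h0
    rw [hpZ] at h0
    have hz := (Finset.sum_eq_zero_iff_of_nonneg (fun y _ => hPnn x y)).mp h0
    rw [hpZY]
    refine Finset.sum_eq_zero fun y hy => ?_
    simp only [Finset.mem_filter, Finset.mem_univ, true_and] at hy
    exact hz y (by simp [hy.1])
  -- summing the product over all label vectors with coordinate i fixed to j gives η (x i) j
  have hfix : ∀ (x : Fin m → 𝒳) (i : Fin m) (j : Fin k),
      (∑ y ∈ Finset.univ.filter (fun y : Fin m → Fin k => y i = j), ∏ v, η (x v) (y v))
        = η (x i) j := by
    intro x i j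
    have h1 : (∑ y ∈ Finset.univ.filter (fun y : Fin m → Fin k => y i = j),
          ∏ v, η (x v) (y v))
        = ∑ y : Fin m → Fin k, ∏ v,
            (if v = i then (if y v = j then η (x v) (y v) else 0) else η (x v) (y v)) := by
      rw [Finset.sum_filter]
      refine Finset.sum_congr rfl fun y _ => ?_
      by_cases h : y i = j
      · simp only [h, if_true]
        refine Finset.prod_congr rfl fun v _ => ?_
        by_cases hv : v = i
        · subst hv; simp [h]
        · simp [hv]
      · simp only [h, if_false]
        symm
        refine Finset.prod_eq_zero (Finset.mem_univ i) ?_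
        simp [h]
    rw [h1, ← Fintype.prod_sum
      (fun (v : Fin m) (j' : Fin k) =>
        if v = i then (if j' = j then η (x v) j' else 0) else η (x v) j')]
    rw [Fintype.prod_eq_single i]
    · simp
    · intro v hv
      simp [hv, hη1]
  -- summing pZY over z recovers η
  have hsumz : ∀ x i j, ∑ z, pZY x z i j = η (x i) j := by
    intro x i j
    have hflip : ∀ z : Z,
        pZY x z i j = ∑ y ∈ (Finset.univ.filter
            (fun y : Fin m → Fin k => y i = j)).filter (fun y => g y = z),
          ∏ v, η (x v) (y v) := by
      intro z
      rw [hpZY, Finset.filter_filter]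
      refine Finset.sum_congr ?_ (fun _ _ => rfl)
      ext y
      simp [and_comm]
    simp only [hflip]
    rw [← hfix x i j]
    simp only [Finset.sum_filter]
    rw [Finset.sum_comm]
    refine Finset.sum_congr rfl fun y _ => ?_
    simp
  -- simplify the summand of the RHS
  have hRHS : ∀ (x : Fin m → 𝒳) (z : Z),
      (if 0 < pZ x z then
          px x * pZ x z *
            ((1 / (m : ℝ)) * (1 / pZ x z) * ∑ i, ∑ j, pZY x z i j * L (x i) j)
        else 0)
      = px x * ((1 / (m : ℝ)) * ∑ i, ∑ j, pZY x z i j * L (x i) j) := by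
    intro x z
    by_cases h : 0 < pZ x z
    · rw [if_pos h]
      have hne : pZ x z ≠ 0 := ne_of_gt h
      field_simp
    · rw [if_neg h]
      have h0 : pZ x z = 0 := le_antisymm (not_lt.mp h) (hpZnn x z)
      have hz0 : ∀ i j, pZY x z i j = 0 := fun i j => hpZY0 x z i j h0
      simp [hz0]
  -- collapse the z-sum on the RHS
  have hx_z : ∀ x : Fin m → 𝒳,
      (∑ z, px x * ((1 / (m : ℝ)) * ∑ i, ∑ j, pZY x z i j * L (x i) j))
      = px x * ((1 / (m : ℝ)) * ∑ i, ∑ j, η (x i) j * L (x i) j) := by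
    intro x
    rw [← Finset.mul_sum, ← Finset.mul_sum]
    congr 2
    rw [Finset.sum_comm]
    refine Finset.sum_congr rfl fun i _ => ?_
    rw [Finset.sum_comm]
    refine Finset.sum_congr rfl fun j _ => ?_
    rw [← Finset.sum_mul, hsumz]
  -- the LHS as an average over i
  have hL : ∀ i : Fin m,
      (∑ a, ∑ j, μ a j * L a j) = ∑ x, px x * ∑ j, η (x i) j * L (x i) j := by
    intro i
    have hA : ∀ a : 𝒳, (∑ j, μ a j * L a j)
        = ∑ x ∈ Finset.univ.filter (fun x : Fin m → 𝒳 => x i = a),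
            ∑ j, px x * η (x i) j * L (x i) j := by
      intro a
      rw [Finset.sum_comm]
      refine Finset.sum_congr rfl fun j _ => ?_
      rw [hμ i a j, Finset.sum_mul]
      refine Finset.sum_congr rfl fun x hx => ?_
      simp only [Finset.mem_filter, Finset.mem_univ, true_and] at hx
      rw [hx]
    rw [Finset.sum_congr rfl fun a _ => hA a]
    simp only [Finset.sum_filter]
    rw [Finset.sum_comm]
    refine Finset.sum_congr rfl fun x _ => ?_
    rw [Finset.sum_ite_eq]
    simp only [Finset.mem_univ, if_true, Finset.mul_sum]
    exact Finset.sum_congr rfl fun j _ => (mul_assoc _ _ _)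
  -- put everything together
  have hsum : (∑ i : Fin m, ∑ x, px x * ∑ j, η (x i) j * L (x i) j)
      = (m : ℝ) * (∑ a, ∑ j, μ a j * L a j) := by
    rw [Finset.sum_congr rfl fun i _ => (hL i).symm]
    simp [Finset.sum_const, Finset.card_univ, mul_comm]
  calc ∑ a, ∑ j, μ a j * L a j
      = (1 / (m : ℝ)) * ((m : ℝ) * (∑ a, ∑ j, μ a j * L a j)) := by
        field_simp
    _ = (1 / (m : ℝ)) * ∑ i : Fin m, ∑ x, px x * ∑ j, η (x i) j * L (x i) j := by
        rw [hsum]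
    _ = ∑ x, px x * ((1 / (m : ℝ)) * ∑ i, ∑ j, η (x i) j * L (x i) j) := by
        simp only [Finset.mul_sum]
        rw [Finset.sum_comm]
        refine Finset.sum_congr rfl fun x _ => Finset.sum_congr rfl fun i _ =>
          Finset.sum_congr rfl fun j _ => by ring
    _ = ∑ x, ∑ z, px x * ((1 / (m : ℝ)) * ∑ i, ∑ j, pZY x z i j * L (x i) j) := by
        exact (Finset.sum_congr rfl fun x _ => (hx_z x).symm)
    _ = _ := by
        refine Finset.sum_congr rfl fun x _ => Finset.sum_congr rfl fun z _ => ?_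
        exact (hRHS x z).symm
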